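/- arXiv:1810.08905 — 3 statements merged into one kernel-verified Lean document; each statement's English description precedes it below -/
import Mathlib

section
/- Let P be a polynomial of degree at most n with all coefficients in {−1, 0, 1}, and let λ be an algebraic number of degree d. If P(λ) ≠ 0, then |P(λ)| ≥ M(λ)^{−n} (n+1)^{1−d}. -/
open Polynomial

lemma garsia_isIntegral_aeval {F : Type*} [CommRing F] {x : F} (hx : IsIntegral ℤ x)
    (q : Polynomial ℤ) : IsIntegral ℤ (aeval x q) :=
  IsIntegral.of_mem_of_fg _ hx.fg_adjoin_singleton _ (aeval_mem_adjoin_singleton _ _)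

lemma garsia_prod_map_le {s : Multiset ℂ} {f g : ℂ → ℝ} (h0 : ∀ z ∈ s, 0 ≤ f z)
    (h : ∀ z ∈ s, f z ≤ g z) : (s.map f).prod ≤ (s.map g).prod := by
  induction s using Multiset.induction with
  | empty => simp
  | cons a t ih =>
    simp only [Multiset.map_cons, Multiset.prod_cons]
    have hf0 : (0:ℝ) ≤ (t.map f).prod := by
      apply Multiset.prod_nonneg
      intro x hx
      obtain ⟨z, hz, rfl⟩ := Multiset.mem_map.mp hx
      exact h0 z (Multiset.mem_cons_of_mem hz)
    have hfa : 0 ≤ f a := h0 a (Multiset.mem_cons_self a t)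
    have hga : f a ≤ g a := h a (Multiset.mem_cons_self a t)
    have ht := ih (fun z hz => h0 z (Multiset.mem_cons_of_mem hz))
      (fun z hz => h z (Multiset.mem_cons_of_mem hz))
    exact mul_le_mul hga ht hf0 (le_trans hfa hga)

lemma garsia_abs_aeval_le (P : Polynomial ℤ) (hc : ∀ i, P.coeff i ∈ ({-1, 0, 1} : Set ℤ))
    {n : ℕ} (hd : P.natDegree ≤ n) (z : ℂ) :
    ‖aeval z P‖ ≤ ((n : ℝ) + 1) * max 1 (‖z‖) ^ n := by
  have h1 : ∀ i, |(P.coeff i : ℝ)| ≤ 1 := by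
    intro i
    have h := hc i
    simp only [Set.mem_insert_iff, Set.mem_singleton_iff] at h
    rcases h with h | h | h <;> simp [h]
  have hmax : (1:ℝ) ≤ max 1 (‖z‖) := le_max_left _ _
  rw [aeval_eq_sum_range' (lt_of_le_of_lt hd (Nat.lt_succ_self n))]
  calc ‖∑ i ∈ Finset.range (n+1), P.coeff i • z ^ i‖
      ≤ ∑ i ∈ Finset.range (n+1), ‖P.coeff i • z ^ i‖ :=
        norm_sum_le _ _
    _ ≤ ∑ _i ∈ Finset.range (n+1), max 1 (‖z‖) ^ n := by
        apply Finset.sum_le_sum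
        intro i hi
        rw [zsmul_eq_mul, norm_mul, norm_pow, Complex.norm_intCast]
        calc |(P.coeff i : ℝ)| * ‖z‖ ^ i
            ≤ 1 * max 1 (‖z‖) ^ n := by
              apply mul_le_mul (h1 i) ?_ (by positivity) zero_le_one
              calc ‖z‖ ^ i ≤ max 1 (‖z‖) ^ i :=
                    pow_le_pow_left₀ (norm_nonneg z) (le_max_right _ _) i
                _ ≤ max 1 (‖z‖) ^ n :=
                    pow_le_pow_right₀ hmax (Finset.mem_range_succ_iff.mp hi)
          _ = max 1 (‖z‖) ^ n := one_mul _
    _ = ((n:ℝ)+1) * max 1 (‖z‖) ^ n := by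
        rw [Finset.sum_const, Finset.card_range, nsmul_eq_mul]; push_cast; ring




/-- The Mahler measure of an integer polynomial `p = a_d (x - z_1) ⋯ (x - z_d)`:
`|a_d| * ∏_{j : |z_j| > 1} |z_j|`, the roots being taken in `ℂ` with multiplicity. -/
noncomputable def mahlerMeasure (p : Polynomial ℤ) : ℝ :=
  |(p.leadingCoeff : ℝ)| *
    (((p.map (Int.castRingHom ℂ)).roots.filter fun z => 1 < ‖z‖).map (fun z : ℂ => ‖z‖)).prod

lemma garsia_mahler_eq (p : Polynomial ℤ) :
    mahlerMeasure p = |(p.leadingCoeff : ℝ)| *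
      ((p.map (Int.castRingHom ℂ)).roots.map fun z => max 1 (‖z‖)).prod := by
  unfold _root_.mahlerMeasure
  congr 1
  classical
  set s := (p.map (Int.castRingHom ℂ)).roots
  conv_rhs => rw [← Multiset.filter_add_not (fun z => 1 < ‖z‖) s]
  rw [Multiset.map_add, Multiset.prod_add]
  have h1 : ((Multiset.filter (fun z => 1 < ‖z‖) s).map
      fun z => max 1 (‖z‖)) =
      (Multiset.filter (fun z => 1 < ‖z‖) s).map (fun z : ℂ => ‖z‖) := by
    apply Multiset.map_congr rfl
    intro z hz
    exact max_eq_right (le_of_lt (Multiset.mem_filter.mp hz).2)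
  have h2 : ((Multiset.filter (fun z => ¬ 1 < ‖z‖) s).map
      fun z => max 1 (‖z‖)).prod = 1 := by
    apply Multiset.prod_eq_one
    intro x hx
    obtain ⟨z, hz, rfl⟩ := Multiset.mem_map.mp hx
    exact max_eq_left (not_lt.mp (Multiset.mem_filter.mp hz).2)
  rw [h1, h2, mul_one]



lemma garsia_key (n : ℕ) (p P : Polynomial ℤ) (hp_irr : Irreducible p)
    (hp_deg1 : 1 ≤ p.natDegree)
    (hPlead : P.leadingCoeff = 1 ∨ P.leadingCoeff = -1)
    (hP_deg : P.natDegree ≤ n)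
    (hnd : ¬ (p.map (Int.castRingHom ℚ) ∣ P.map (Int.castRingHom ℚ))) :
    ∃ k : ℤ, k ≠ 0 ∧
      |(p.leadingCoeff : ℝ)| ^ n *
        ((p.map (Int.castRingHom ℂ)).roots.map fun z => ‖aeval z P‖).prod
      = |(k : ℝ)| := by
  classical
  have hp0 : p ≠ 0 := hp_irr.ne_zero
  have hP0 : P ≠ 0 := by rintro rfl; simp at hPlead
  -- primitivity and irreducibility over ℚ
  have hprim : p.IsPrimitive := by
    intro r hr
    obtain ⟨q, hq⟩ := hr
    rcases hp_irr.isUnit_or_isUnit hq with h | h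
    · exact isUnit_C.mp h
    · exfalso
      have hq0 : q ≠ 0 := by rintro rfl; rw [mul_zero] at hq; exact hp0 hq
      have hr0 : (C r : Polynomial ℤ) ≠ 0 := by
        rintro h0; rw [h0, zero_mul] at hq; exact hp0 hq
      have hdeg : p.natDegree = 0 := by
        rw [hq, natDegree_mul hr0 hq0, natDegree_C, natDegree_eq_zero_of_isUnit h]
      omega
  set pQ := p.map (Int.castRingHom ℚ) with hpQ
  set PQ := P.map (Int.castRingHom ℚ) with hPQ
  have hirrQ : Irreducible pQ := by
    rw [hpQ, ← algebraMap_int_eq]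
    exact (hprim.irreducible_iff_irreducible_map_fraction_map).mp hp_irr
  have hpQ0 : pQ ≠ 0 := by
    rw [hpQ, Ne, Polynomial.map_eq_zero_iff Int.cast_injective]; exact hp0
  have hPQ0 : PQ ≠ 0 := by
    rw [hPQ, Ne, Polynomial.map_eq_zero_iff Int.cast_injective]; exact hP0
  set q0 := pQ * PQ with hq0def
  have hq00 : q0 ≠ 0 := mul_ne_zero hpQ0 hPQ0
  set F := q0.SplittingField with hF
  haveI : IsGalois ℚ F := { to_normal := Polynomial.SplittingField.instNormal q0 }
  haveI : CharZero F := charZero_of_injective_algebraMap (algebraMap ℚ F).injective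
  set pF := p.map (Int.castRingHom F) with hpF
  set PF := P.map (Int.castRingHom F) with hPF
  have hcast : ∀ g : Polynomial ℤ,
      g.map (Int.castRingHom F) = (g.map (Int.castRingHom ℚ)).map (algebraMap ℚ F) := by
    intro g
    rw [Polynomial.map_map]
    have h : (algebraMap ℚ F).comp (Int.castRingHom ℚ) = Int.castRingHom F :=
      Subsingleton.elim _ _
    rw [h]
  have hsp : pF.Splits := by
    rw [hpF, hcast]
    exact (SplittingField.splits q0).of_dvd (Polynomial.map_ne_zero hq00) (Polynomial.map_dvd _ ⟨PQ, rfl⟩)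
  have hsP : PF.Splits := by
    rw [hPF, hcast]
    exact (SplittingField.splits q0).of_dvd (Polynomial.map_ne_zero hq00) (Polynomial.map_dvd _ ⟨pQ, mul_comm _ _⟩)
  set R := pF.roots with hR
  set S := PF.roots with hS
  have hrootp : ∀ z ∈ R, aeval z p = 0 := by
    intro z hz
    have h1 : pF.eval z = 0 := isRoot_of_mem_roots hz
    rwa [hpF, eval_map, ← algebraMap_int_eq, ← aeval_def] at h1
  have hrootP : ∀ μ ∈ S, aeval μ P = 0 := by
    intro μ hμ
    have h1 : PF.eval μ = 0 := isRoot_of_mem_roots hμ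
    rwa [hPF, eval_map, ← algebraMap_int_eq, ← aeval_def] at h1
  -- non-vanishing of P at roots of p
  have hA : ∀ z ∈ R, aeval z P ≠ 0 := by
    intro z hz hPz
    apply hnd
    have hzq : aeval z pQ = 0 := by
      rw [hpQ, ← algebraMap_int_eq, aeval_map_algebraMap]; exact hrootp z hz
    have hzP : aeval z PQ = 0 := by
      rw [hPQ, ← algebraMap_int_eq, aeval_map_algebraMap]; exact hPz
    have hmin := minpoly.eq_of_irreducible hirrQ hzq
    have h1 : minpoly ℚ z ∣ PQ := minpoly.dvd ℚ z hzP
    exact dvd_trans ⟨_, hmin.symm⟩ h1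
  set N := (R.map fun z => aeval z P).prod with hN
  have hN0 : N ≠ 0 := by
    rw [hN]
    apply Multiset.prod_ne_zero
    intro h
    obtain ⟨z, hz, h0⟩ := Multiset.mem_map.mp h
    exact hA z hz h0
  -- Galois invariance: N is rational
  have hfix : ∀ σ : F ≃ₐ[ℚ] F, σ N = N := by
    intro σ
    have hRmap : R.map (⇑σ) = R := by
      have h1 : pF.map (σ : F →+* F) = pF := by
        rw [hpF, Polynomial.map_map]
        have h : (↑σ : F →+* F).comp (Int.castRingHom F) = Int.castRingHom F :=
          Subsingleton.elim _ _
        rw [h]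
      have h2 := hsp.roots_map (σ : F →+* F)
      rw [h1] at h2
      exact h2.symm
    have hcomm : ∀ z : F, σ (aeval z P) = aeval (σ z) P := fun z =>
      (aeval_algHom_apply ((σ : F →ₐ[ℚ] F).restrictScalars ℤ) z P).symm
    calc σ N = ((R.map fun z => aeval z P).map (⇑σ)).prod := by
          rw [hN, map_multiset_prod]
      _ = (R.map fun z => aeval (σ z) P).prod := by
          rw [Multiset.map_map]
          exact congrArg Multiset.prod (Multiset.map_congr rfl fun z _ => hcomm z)
      _ = ((R.map (⇑σ)).map fun z => aeval z P).prod := by rw [Multiset.map_map]; rfl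
      _ = N := by rw [hRmap, hN]
  have hmem : N ∈ IntermediateField.fixedField (⊤ : Subgroup (F ≃ₐ[ℚ] F)) :=
    fun g => hfix g
  have hbot : IntermediateField.fixedField (⊤ : Subgroup (F ≃ₐ[ℚ] F)) = ⊥ :=
    OrderIso.map_bot (IsGalois.intermediateFieldEquivSubgroup (F := ℚ) (E := F)).symm
  rw [hbot, IntermediateField.mem_bot] at hmem
  obtain ⟨r, hr⟩ := hmem
  -- integrality
  set a := p.leadingCoeff with ha
  have ha0 : a ≠ 0 := leadingCoeff_ne_zero.mpr hp0
  have hSint : ∀ μ ∈ S, IsIntegral ℤ μ := by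
    intro μ hμ
    have h0 : eval₂ (algebraMap ℤ F) μ P = 0 := by
      have h1 : PF.eval μ = 0 := isRoot_of_mem_roots hμ
      rwa [hPF, eval_map, ← algebraMap_int_eq] at h1
    rcases hPlead with h | h
    · exact ⟨P, h, h0⟩
    · refine ⟨-P, ?_, by rw [eval₂_neg, h0, neg_zero]⟩
      unfold Monic
      rw [leadingCoeff_neg, h, neg_neg]
  have hlcP : PF.leadingCoeff = ((P.leadingCoeff : ℤ) : F) := by
    rw [hPF]
    exact leadingCoeff_map_of_leadingCoeff_ne_zero _
      (by simpa using leadingCoeff_ne_zero.mpr hP0)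
  have hlcp : pF.leadingCoeff = ((a : ℤ) : F) := by
    rw [hpF]
    exact leadingCoeff_map_of_leadingCoeff_ne_zero _
      (by simpa using leadingCoeff_ne_zero.mpr hp0)
  have hPFdecomp := hsP.eq_prod_roots
  have hpFdecomp := hsp.eq_prod_roots
  have heval_P : ∀ z : F, aeval z P = ((P.leadingCoeff : ℤ) : F) *
      (S.map fun μ => z - μ).prod := by
    intro z
    have h1 : aeval z P = eval z PF := by
      rw [hPF, eval_map, aeval_def]
      exact congrArg (fun f => eval₂ f z P) (Subsingleton.elim _ _)
    rw [h1]
    conv_lhs => rw [hPFdecomp]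
    rw [eval_mul, eval_C, hlcP, eval_multiset_prod, Multiset.map_map]
    congr 2
    apply Multiset.map_congr rfl
    intro μ _
    simp
  have heval_p : ∀ z : F, aeval z p = ((a : ℤ) : F) * (R.map fun w => z - w).prod := by
    intro z
    have h1 : aeval z p = eval z pF := by
      rw [hpF, eval_map, aeval_def]
      exact congrArg (fun f => eval₂ f z p) (Subsingleton.elim _ _)
    rw [h1]
    conv_lhs => rw [hpFdecomp]
    rw [eval_mul, eval_C, hlcp, eval_multiset_prod, Multiset.map_map]
    congr 2
    apply Multiset.map_congr rfl
    intro μ _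
    simp
  set W := (R.map fun z => (S.map fun μ => z - μ).prod).prod with hW
  have hNW : N = ((P.leadingCoeff : ℤ) : F) ^ Multiset.card R * W := by
    rw [hN]
    have h1 : (R.map fun z => aeval z P) =
        R.map fun z => ((P.leadingCoeff : ℤ) : F) * (S.map fun μ => z - μ).prod :=
      Multiset.map_congr rfl fun z _ => heval_P z
    rw [h1, Multiset.prod_map_mul, hW]
    congr 1
    rw [Multiset.map_const', Multiset.prod_replicate]
  set T := (S.map fun μ => aeval μ p).prod with hT
  have hTW : T = ((a : ℤ) : F) ^ Multiset.card S *
      ((-1 : F) ^ Multiset.card R) ^ Multiset.card S * W := by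
    rw [hT]
    have h1 : (S.map fun μ => aeval μ p) = S.map fun μ =>
        ((a : ℤ) : F) * ((-1 : F) ^ Multiset.card R * (R.map fun z => z - μ).prod) := by
      apply Multiset.map_congr rfl
      intro μ _
      rw [heval_p μ]
      congr 1
      have h2 : (R.map fun w => μ - w) = R.map fun w => (-1 : F) * (w - μ) :=
        Multiset.map_congr rfl fun w _ => by ring
      rw [h2, Multiset.prod_map_mul, Multiset.map_const', Multiset.prod_replicate]
    rw [h1, Multiset.prod_map_mul, Multiset.map_const', Multiset.prod_replicate,
      Multiset.prod_map_mul, Multiset.map_const', Multiset.prod_replicate]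
    have hswap : (S.map fun μ => (R.map fun z => z - μ).prod).prod = W := by
      rw [hW, Multiset.prod_map_prod_map]
    rw [hswap]
    ring
  have hintW : IsIntegral ℤ (((a : ℤ) : F) ^ Multiset.card S * W) := by
    have hintT : IsIntegral ℤ T := by
      rw [hT]
      apply (integralClosure ℤ F).multiset_prod_mem
      intro x hx
      obtain ⟨μ, hμ, rfl⟩ := Multiset.mem_map.mp hx
      exact garsia_isIntegral_aeval (hSint μ hμ) p
    have hε : ((-1 : F) ^ Multiset.card R) ^ Multiset.card S *
        (((-1 : F) ^ Multiset.card R) ^ Multiset.card S) = 1 := by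
      rw [← pow_mul, ← pow_add, ← two_mul, pow_mul]
      norm_num
    have h3 : ((a : ℤ) : F) ^ Multiset.card S * W =
        ((-1 : F) ^ Multiset.card R) ^ Multiset.card S * T := by
      rw [hTW]
      linear_combination (-(((a : ℤ) : F) ^ Multiset.card S * W)) * hε
    rw [h3]
    have hεint : IsIntegral ℤ (((-1 : F) ^ Multiset.card R) ^ Multiset.card S) := by
      have : ((-1 : F) ^ Multiset.card R) ^ Multiset.card S =
          algebraMap ℤ F (((-1) ^ Multiset.card R) ^ Multiset.card S) := by
        rw [map_pow, map_pow]; norm_num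
      rw [this]
      exact isIntegral_algebraMap
    exact hεint.mul hintT
  have hcardS : Multiset.card S = P.natDegree := by
    have h1 := (splits_iff_card_roots.mp hsP)
    rw [hS, h1, hPF]
    exact natDegree_map_of_leadingCoeff_ne_zero _
      (by simpa using leadingCoeff_ne_zero.mpr hP0)
  have hintaN : IsIntegral ℤ (((a : ℤ) : F) ^ n * N) := by
    have hn : n - Multiset.card S + Multiset.card S = n :=
      Nat.sub_add_cancel (by rw [hcardS]; exact hP_deg)
    have h4 : ((a : ℤ) : F) ^ n * N = ((P.leadingCoeff : ℤ) : F) ^ Multiset.card R *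
        (((a : ℤ) : F) ^ (n - Multiset.card S) * (((a : ℤ) : F) ^ Multiset.card S * W)) := by
      rw [hNW, show ((a : ℤ) : F) ^ n =
        ((a : ℤ) : F) ^ (n - Multiset.card S) * ((a : ℤ) : F) ^ Multiset.card S from by
          rw [← pow_add, hn]]
      ring
    rw [h4]
    refine IsIntegral.mul ?_ (IsIntegral.mul ?_ hintW)
    · have : ((P.leadingCoeff : ℤ) : F) ^ Multiset.card R =
          algebraMap ℤ F (P.leadingCoeff ^ Multiset.card R) := by rw [map_pow, eq_intCast]
      rw [this]; exact isIntegral_algebraMap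
    · have : ((a : ℤ) : F) ^ (n - Multiset.card S) =
          algebraMap ℤ F (a ^ (n - Multiset.card S)) := by rw [map_pow, eq_intCast]
      rw [this]; exact isIntegral_algebraMap
  -- descend to ℚ then ℤ
  have hrr : algebraMap ℚ F ((a : ℚ) ^ n * r) = ((a : ℤ) : F) ^ n * N := by
    rw [map_mul, map_pow, hr, map_intCast]
  have hint : IsIntegral ℤ ((a : ℚ) ^ n * r) := by
    have h5 := hintaN
    rw [← hrr] at h5
    exact (isIntegral_algebraMap_iff (algebraMap ℚ F).injective).mp h5
  obtain ⟨k, hk⟩ := IsIntegrallyClosed.isIntegral_iff.mp hint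
  have hr0 : r ≠ 0 := by
    rintro rfl; rw [map_zero] at hr; exact hN0 hr.symm
  have hk0 : k ≠ 0 := by
    rintro rfl
    rw [map_zero] at hk
    rcases mul_eq_zero.mp hk.symm with h | h
    · exact pow_ne_zero n ((Int.cast_ne_zero (α := ℚ)).mpr ha0) h
    · exact hr0 h
  refine ⟨k, hk0, ?_⟩
  -- transfer to ℂ
  haveI : Algebra.IsAlgebraic ℚ F := Algebra.IsAlgebraic.of_finite ℚ F
  let φ : F →ₐ[ℚ] ℂ := IsAlgClosed.lift
  have hRC : (p.map (Int.castRingHom ℂ)).roots = R.map (⇑φ) := by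
    have h1 : p.map (Int.castRingHom ℂ) = pF.map (φ : F →+* ℂ) := by
      rw [hpF, Polynomial.map_map]
      have h : ((φ : F →+* ℂ)).comp (Int.castRingHom F) = Int.castRingHom ℂ :=
        Subsingleton.elim _ _
      rw [h]
    rw [h1, hsp.roots_map _]
    exact Multiset.map_congr rfl fun z _ => rfl
  have hNC : ((p.map (Int.castRingHom ℂ)).roots.map fun z => aeval z P).prod = (r : ℂ) := by
    rw [hRC, Multiset.map_map]
    have h1 : (R.map fun z => aeval (φ z) P).prod = φ N := by
      rw [hN, map_multiset_prod, Multiset.map_map]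
      exact congrArg Multiset.prod (Multiset.map_congr rfl fun z _ =>
        (aeval_algHom_apply (φ.restrictScalars ℤ) z P))
    have h2 : (R.map ((fun z => aeval z P) ∘ ⇑φ)).prod = φ N := h1
    rw [h2, ← hr]
    simp [AlgHom.commutes]
  have habs : ((p.map (Int.castRingHom ℂ)).roots.map fun z => ‖aeval z P‖).prod
      = |(r : ℝ)| := by
    have h1 := congrArg (normHom : ℂ →*₀ ℝ) hNC
    rw [map_multiset_prod, Multiset.map_map] at h1
    rw [show ((fun z : ℂ => ‖aeval z P‖)) = (⇑(normHom : ℂ →*₀ ℝ) ∘ fun z => aeval z P)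
      from rfl] at *
    rw [h1]
    exact Complex.norm_ratCast r
  rw [habs]
  have hkr : ((k : ℝ)) = ((a : ℝ)) ^ n * ((r : ℝ)) := by exact_mod_cast congrArg (Rat.cast (K := ℝ)) hk
  rw [hkr, abs_mul, abs_pow]


lemma garsia_one_le_prod {s : Multiset ℂ} {g : ℂ → ℝ} (h : ∀ z ∈ s, 1 ≤ g z) :
    1 ≤ (s.map g).prod := by
  have h2 := garsia_prod_map_le (s := s) (f := fun _ => 1) (fun z _ => zero_le_one) h
  simpa [Multiset.map_const', Multiset.prod_replicate] using h2

/-- Garsia's lemma: if `P` has degree at most `n` and coefficients in `{-1, 0, 1}`, and `l` is an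
algebraic number of degree `d` (with minimal polynomial `p` over `ℤ`, irreducible with positive
leading coefficient), then `P(l) ≠ 0` implies `|P(l)| ≥ M(l) ^ (-n) * (n+1) ^ (1-d)`. -/
theorem garsia_lower_bound (l : ℂ) (d n : ℕ) (p : Polynomial ℤ)
    (hp_irr : Irreducible p) (hp_root : Polynomial.aeval l p = 0)
    (hp_lead : 0 < p.leadingCoeff) (hp_deg : p.natDegree = d)
    (P : Polynomial ℤ) (hP_coeff : ∀ i, P.coeff i ∈ ({-1, 0, 1} : Set ℤ))
    (hP_deg : P.natDegree ≤ n) (hP_ne : Polynomial.aeval l P ≠ 0) :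
    mahlerMeasure p ^ (-(n : ℝ)) * ((n : ℝ) + 1) ^ (1 - (d : ℝ)) ≤
      ‖Polynomial.aeval l P‖ := by
  classical
  have hp0 : p ≠ 0 := hp_irr.ne_zero
  have hP0 : P ≠ 0 := fun h => hP_ne (by simp [h])
  have hd1 : 1 ≤ p.natDegree := by
    by_contra h
    push_neg at h
    have h0 : p.natDegree = 0 := by omega
    have hC := eq_C_of_natDegree_eq_zero h0
    rw [hC, aeval_C] at hp_root
    rw [algebraMap_int_eq, eq_intCast] at hp_root
    have h2 : p.coeff 0 = 0 := by exact_mod_cast hp_root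
    apply hp0
    rw [hC, h2, map_zero]
  have hPlead : P.leadingCoeff = 1 ∨ P.leadingCoeff = -1 := by
    have h := hP_coeff P.natDegree
    simp only [Set.mem_insert_iff, Set.mem_singleton_iff] at h
    have hne := leadingCoeff_ne_zero.mpr hP0
    rw [leadingCoeff] at hne
    rcases h with h | h | h
    · right; rw [leadingCoeff, h]
    · exact absurd h hne
    · left; rw [leadingCoeff, h]
  have hnd : ¬ (p.map (Int.castRingHom ℚ) ∣ P.map (Int.castRingHom ℚ)) := by
    rintro ⟨g, hg⟩
    apply hP_ne
    have h1 : aeval l (P.map (Int.castRingHom ℚ)) = aeval l P := by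
      rw [← algebraMap_int_eq, aeval_map_algebraMap]
    have h2 : aeval l (p.map (Int.castRingHom ℚ)) = 0 := by
      rw [← algebraMap_int_eq, aeval_map_algebraMap]; exact hp_root
    rw [← h1, hg, map_mul, h2, zero_mul]
  obtain ⟨k, hk0, hk⟩ := garsia_key n p P hp_irr hd1 hPlead hP_deg hnd
  set a := p.leadingCoeff with ha
  set Rl := (p.map (Int.castRingHom ℂ)).roots with hRl
  have hlmem : l ∈ Rl := by
    rw [hRl, mem_roots']
    refine ⟨(Polynomial.map_ne_zero_iff Int.cast_injective).mpr hp0, ?_⟩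
    show eval l (p.map (Int.castRingHom ℂ)) = 0
    rw [eval_map, ← algebraMap_int_eq, ← aeval_def]
    exact hp_root
  set t := Rl.erase l with ht
  have hcons : Rl = l ::ₘ t := (Multiset.cons_erase hlmem).symm
  have hcard : Multiset.card Rl = d := by
    rw [hRl, splits_iff_card_roots.mp (IsAlgClosed.splits _),
      natDegree_map_of_leadingCoeff_ne_zero _ (by simpa using leadingCoeff_ne_zero.mpr hp0),
      hp_deg]
  have hcardt : Multiset.card t = d - 1 := by
    rw [ht, Multiset.card_erase_of_mem hlmem, hcard]
    rfl
  set A := fun z : ℂ => ‖aeval z P‖ with hAdef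
  set G := fun z : ℂ => max 1 (‖z‖) with hGdef
  have haR : (1:ℝ) ≤ |(a:ℝ)| := by
    have h2 : (1:ℝ) ≤ (a:ℝ) := by exact_mod_cast hp_lead
    calc (1:ℝ) ≤ (a:ℝ) := h2
      _ ≤ |(a:ℝ)| := le_abs_self _
  have h1 : (1:ℝ) ≤ |(a:ℝ)| ^ n * (Rl.map A).prod := by
    rw [hk]
    have h2 : (1:ℤ) ≤ |k| := Int.one_le_abs hk0
    exact_mod_cast h2
  have hprodA : (Rl.map A).prod = A l * (t.map A).prod := by
    rw [hcons, Multiset.map_cons, Multiset.prod_cons]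
  have hbound : (t.map A).prod ≤ ((n:ℝ)+1) ^ (d-1) * ((t.map G).prod) ^ n := by
    calc (t.map A).prod ≤ (t.map fun z => ((n:ℝ)+1) * G z ^ n).prod :=
        garsia_prod_map_le (fun z _ => norm_nonneg _)
          (fun z _ => garsia_abs_aeval_le P hP_coeff hP_deg z)
      _ = ((n:ℝ)+1) ^ Multiset.card t * (t.map fun z => G z ^ n).prod := by
          rw [Multiset.prod_map_mul, Multiset.map_const', Multiset.prod_replicate]
      _ = ((n:ℝ)+1) ^ (d-1) * ((t.map G).prod) ^ n := by
          rw [hcardt, Multiset.prod_map_pow]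
  have hGnonneg : ∀ s : Multiset ℂ, (0:ℝ) ≤ (s.map G).prod := by
    intro s
    apply Multiset.prod_nonneg
    intro x hx
    obtain ⟨z, _, rfl⟩ := Multiset.mem_map.mp hx
    exact le_trans zero_le_one (le_max_left _ _)
  have hG1 : ∀ s : Multiset ℂ, (1:ℝ) ≤ (s.map G).prod := fun s =>
    garsia_one_le_prod (fun z _ => le_max_left _ _)
  have hM : mahlerMeasure p = |(a:ℝ)| * (Rl.map G).prod := garsia_mahler_eq p
  set M := mahlerMeasure p with hMdef
  have hM1 : (1:ℝ) ≤ M := by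
    rw [hM]
    have := mul_le_mul haR (hG1 Rl) zero_le_one (le_trans zero_le_one haR)
    simpa using this
  have hMpos : (0:ℝ) < M := lt_of_lt_of_le zero_lt_one hM1
  have hMn : |(a:ℝ)| ^ n * ((t.map G).prod) ^ n ≤ M ^ n := by
    have hbase : |(a:ℝ)| * (t.map G).prod ≤ M := by
      rw [hM, hcons, Multiset.map_cons, Multiset.prod_cons]
      have h3 : (t.map G).prod ≤ G l * (t.map G).prod :=
        le_mul_of_one_le_left (hGnonneg t) (le_max_left 1 _)
      have h4 : (0:ℝ) ≤ |(a:ℝ)| := abs_nonneg _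
      nlinarith [hGnonneg t]
    calc |(a:ℝ)| ^ n * ((t.map G).prod) ^ n = (|(a:ℝ)| * (t.map G).prod) ^ n := by
          rw [mul_pow]
      _ ≤ M ^ n := pow_le_pow_left₀ (mul_nonneg (abs_nonneg _) (hGnonneg t)) hbase n
  have hfinal : (1:ℝ) ≤ A l * (((n:ℝ)+1) ^ (d-1) * M ^ n) := by
    calc (1:ℝ) ≤ |(a:ℝ)| ^ n * (Rl.map A).prod := h1
      _ = |(a:ℝ)| ^ n * (A l * (t.map A).prod) := by rw [hprodA]
      _ ≤ |(a:ℝ)| ^ n * (A l * (((n:ℝ)+1) ^ (d-1) * ((t.map G).prod) ^ n)) := by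
          apply mul_le_mul_of_nonneg_left ?_ (by positivity)
          exact mul_le_mul_of_nonneg_left hbound (norm_nonneg _)
      _ = A l * (((n:ℝ)+1) ^ (d-1) * (|(a:ℝ)| ^ n * ((t.map G).prod) ^ n)) := by ring
      _ ≤ A l * (((n:ℝ)+1) ^ (d-1) * M ^ n) := by
          apply mul_le_mul_of_nonneg_left ?_ (norm_nonneg _)
          exact mul_le_mul_of_nonneg_left hMn (by positivity)
  have hd' : (1:ℝ) - (d:ℝ) = -(((d - 1 : ℕ)):ℝ) := by
    have h5 : (d:ℝ) = ((d - 1 : ℕ):ℝ) + 1 := by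
      have : 1 ≤ d := hp_deg ▸ hd1
      push_cast [Nat.cast_sub this]
      ring
    rw [h5]; ring
  rw [show (-(n:ℝ)) = -((n:ℕ):ℝ) from rfl, Real.rpow_neg hMpos.le, Real.rpow_natCast,
    hd', Real.rpow_neg (by positivity), Real.rpow_natCast]
  rw [← mul_inv]
  have hX : (0:ℝ) < M ^ n * ((n:ℝ)+1) ^ (d-1) := by positivity
  have h6 : 1 / (M ^ n * ((n:ℝ)+1) ^ (d-1)) ≤ A l := by
    rw [div_le_iff₀ hX]
    calc (1:ℝ) ≤ A l * (((n:ℝ)+1) ^ (d-1) * M ^ n) := hfinal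
      _ = A l * (M ^ n * ((n:ℝ)+1) ^ (d-1)) := by ring
  simpa [one_div] using h6
end

section
/- There is an absolute constant δ > 0 such that [0, 2^{−2/3}] is an interval of δ-transversality for 𝒫, and [0, 2^{−1/2}] is an interval of δ-transversality for 𝒫_1 and for 𝒫_2. -/
open Filter Finset


/-- `powerSeriesFamily A` is the set of functions on `ℝ` given by power series of the form
`1 + ∑_{n ∈ A} a_n * x ^ n` with coefficients `a_n ∈ {-1, 0, 1}`. -/
def powerSeriesFamily (A : Set ℕ) : Set (ℝ → ℝ) :=
  {f | ∃ c : ℕ → ℝ, c 0 = 1 ∧ (∀ n, n ≠ 0 → c n ∈ ({-1, 0, 1} : Set ℝ)) ∧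
    (∀ n, n ≠ 0 → n ∉ A → c n = 0) ∧ ∀ x : ℝ, f x = ∑' n : ℕ, c n * x ^ n}

/-- `[0, x₀]` is an interval of `δ`-transversality for `powerSeriesFamily A`: for every
`x ∈ [0, x₀]` and every `f` in the family, `f x < δ` implies `deriv f x < -δ`. -/
def IsTransversalityInterval (A : Set ℕ) (δ x₀ : ℝ) : Prop :=
  ∀ f ∈ powerSeriesFamily A, ∀ x ∈ Set.Icc (0 : ℝ) x₀, f x < δ → deriv f x < -δ

open Classical in
/-- auxiliary coefficient majorant -/
noncomputable def dc (A : Set ℕ) (k : ℕ) (n : ℕ) : ℝ :=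
  if n = 0 then -(k : ℝ) else if n ∈ A then |(n : ℝ) - (k : ℝ)| else 0

theorem master (A : Set ℕ) (k N : ℕ) (δ y : ℝ) (hk : 1 ≤ k) (hkN : k ≤ N)
    (hy0 : 0 < y) (hy1 : y < 1) (hδ0 : 0 < δ) (hδ1 : δ < 1)
    (hnum : (∑ n ∈ Finset.range N, dc A k n * y ^ n)
        + y ^ N * (y / (1 - y) ^ 2 + ((N : ℝ) - (k : ℝ)) / (1 - y)) ≤ -((k : ℝ) + 1) * δ) :
    IsTransversalityInterval A δ y := by
  intro f hf x hx hfx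
  obtain ⟨c, hc0, hc1, hcA, hfeq⟩ := hf
  obtain ⟨hx0, hxy⟩ := hx
  have hy1' : |y| < 1 := by rw [abs_of_pos hy0]; exact hy1
  have hx1 : x < 1 := lt_of_le_of_lt hxy hy1
  have hx1' : |x| < 1 := by rw [abs_of_nonneg hx0]; exact hx1
  have hkR : (1 : ℝ) ≤ (k : ℝ) := by exact_mod_cast hk
  -- coefficient bound
  have hcb : ∀ n, |c n| ≤ 1 := by
    intro n
    rcases eq_or_ne n 0 with h | h
    · simp [h, hc0]
    · have h' := hc1 n h
      simp only [Set.mem_insert_iff, Set.mem_singleton_iff] at h'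
      rcases h' with h' | h' | h' <;> simp [h']
  -- summability lemmas
  have hsum1 : ∀ t : ℝ, |t| < 1 → Summable (fun n : ℕ => c n * t ^ n) := by
    intro t ht
    apply Summable.of_norm_bounded (g := fun n : ℕ => |t| ^ n)
      (summable_geometric_of_lt_one (abs_nonneg t) ht)
    intro n
    rw [norm_mul, norm_pow, Real.norm_eq_abs, Real.norm_eq_abs]
    calc |c n| * |t| ^ n ≤ 1 * |t| ^ n := by
          exact mul_le_mul_of_nonneg_right (hcb n) (pow_nonneg (abs_nonneg t) n)
      _ = |t| ^ n := one_mul _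
  have hsumgeo : ∀ t : ℝ, |t| < 1 → Summable (fun n : ℕ => (n : ℝ) * |t| ^ n) := by
    intro t ht
    have := summable_pow_mul_geometric_of_norm_lt_one (R := ℝ) 1
      (r := |t|) (by rwa [Real.norm_eq_abs, abs_abs])
    exact this.congr fun n => by ring
  have hsum2 : ∀ t : ℝ, |t| < 1 → Summable (fun n : ℕ => (n : ℝ) * c n * t ^ n) := by
    intro t ht
    apply Summable.of_norm_bounded (g := fun n : ℕ => (n : ℝ) * |t| ^ n) (hsumgeo t ht)
    intro n
    rw [norm_mul, norm_mul, norm_pow, Real.norm_eq_abs, Real.norm_eq_abs, Real.norm_eq_abs,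
      abs_of_nonneg (by positivity : (0:ℝ) ≤ (n:ℝ))]
    calc (n : ℝ) * |c n| * |t| ^ n ≤ (n : ℝ) * 1 * |t| ^ n := by
          apply mul_le_mul_of_nonneg_right _ (pow_nonneg (abs_nonneg t) n)
          exact mul_le_mul_of_nonneg_left (hcb n) (by positivity)
      _ = (n : ℝ) * |t| ^ n := by ring
  have hdabs : ∀ n, |dc A k n| ≤ (n : ℝ) + (k : ℝ) := by
    intro n
    unfold dc
    split
    · rw [abs_neg, abs_of_nonneg (by positivity)]; nlinarith [Nat.cast_nonneg (α := ℝ) n]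
    · split
      · rw [abs_abs]
        calc |(n : ℝ) - (k : ℝ)| ≤ |(n:ℝ)| + |(k:ℝ)| := abs_sub _ _
          _ = (n : ℝ) + (k : ℝ) := by
              rw [abs_of_nonneg (by positivity), abs_of_nonneg (by positivity)]
      · simpa using by positivity
  have hsumd : ∀ t : ℝ, |t| < 1 → Summable (fun n : ℕ => dc A k n * t ^ n) := by
    intro t ht
    apply Summable.of_norm_bounded
      (g := fun n : ℕ => (n : ℝ) * |t| ^ n + (k : ℝ) * |t| ^ n)
      ((hsumgeo t ht).add ((summable_geometric_of_lt_one (abs_nonneg t) ht).mul_left _))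
    intro n
    rw [norm_mul, norm_pow, Real.norm_eq_abs, Real.norm_eq_abs]
    calc |dc A k n| * |t| ^ n ≤ ((n : ℝ) + (k : ℝ)) * |t| ^ n :=
          mul_le_mul_of_nonneg_right (hdabs n) (pow_nonneg (abs_nonneg t) n)
      _ = (n : ℝ) * |t| ^ n + (k : ℝ) * |t| ^ n := by ring
  -- the derivative of f
  set r : ℝ := (y + 1) / 2 with hr
  have hr0 : 0 < r := by rw [hr]; linarith
  have hr1 : r < 1 := by rw [hr]; linarith
  have hyr : y < r := by rw [hr]; linarith
  set g' : ℝ → ℝ := fun t => ∑' n : ℕ, c n * ((n : ℝ) * t ^ (n - 1)) with hg'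
  have hu : Summable (fun n : ℕ => (n : ℝ) * r ^ (n - 1)) := by
    rw [← summable_nat_add_iff 1]
    have h1 : Summable (fun n : ℕ => ((n : ℝ) + 1) * r ^ n) := by
      have ha := summable_pow_mul_geometric_of_norm_lt_one (R := ℝ) 1
        (r := r) (by rw [Real.norm_eq_abs, abs_of_pos hr0]; exact hr1)
      have hb := summable_geometric_of_lt_one hr0.le hr1
      exact (ha.add hb).congr fun n => by ring
    exact h1.congr fun n => by push_cast; simp
  have hballsub : ∀ z : ℝ, z ∈ Metric.ball (0 : ℝ) r → |z| < r := by
    intro z hz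
    rw [Metric.mem_ball, dist_zero_right, Real.norm_eq_abs] at hz
    exact hz
  have hder : HasDerivAt f (g' x) x := by
    have hx_mem : x ∈ Metric.ball (0 : ℝ) r := by
      rw [Metric.mem_ball, dist_zero_right, Real.norm_eq_abs, abs_of_nonneg hx0]
      linarith
    refine hasDerivAt_of_tendstoUniformlyOn (l := atTop)
      (f := fun (N : ℕ) (t : ℝ) => ∑ n ∈ Finset.range N, c n * t ^ n)
      (f' := fun (N : ℕ) (t : ℝ) => ∑ n ∈ Finset.range N, c n * ((n : ℝ) * t ^ (n - 1)))
      Metric.isOpen_ball ?_ ?_ ?_ hx_mem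
    · apply tendstoUniformlyOn_tsum_nat hu
      intro n z hz
      have hzr : |z| < r := hballsub z hz
      rw [norm_mul, norm_mul, norm_pow, Real.norm_eq_abs, Real.norm_eq_abs, Real.norm_eq_abs,
        abs_of_nonneg (by positivity : (0:ℝ) ≤ (n:ℝ))]
      calc |c n| * ((n : ℝ) * |z| ^ (n-1)) ≤ 1 * ((n : ℝ) * r ^ (n-1)) := by
            apply mul_le_mul (hcb n) _ (by positivity) (by norm_num)
            exact mul_le_mul_of_nonneg_left
              (pow_le_pow_left₀ (abs_nonneg z) hzr.le _) (by positivity)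
        _ = (n : ℝ) * r ^ (n-1) := one_mul _
    · filter_upwards with N z hz
      apply HasDerivAt.fun_sum
      intro n _
      exact (hasDerivAt_pow n z).const_mul (c n)
    · intro z hz
      rw [hfeq z]
      exact (hsum1 z ((hballsub z hz).trans hr1)).hasSum.tendsto_sum_nat
  have hderiv : deriv f x = g' x := hder.deriv
  -- key inequality
  have e1 : x * g' x = ∑' n : ℕ, (n : ℝ) * c n * x ^ n := by
    rw [hg', ← tsum_mul_left]
    apply tsum_congr
    intro n
    cases n with
    | zero => simp
    | succ m => simp only [Nat.add_sub_cancel]; push_cast; ring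
  have e2 : (k : ℝ) * f x = ∑' n : ℕ, (k : ℝ) * (c n * x ^ n) := by
    rw [hfeq x, tsum_mul_left]
  have key : x * g' x - (k : ℝ) * f x ≤ ∑' n : ℕ, dc A k n * x ^ n := by
    rw [e1, e2, ← Summable.tsum_sub (hsum2 x hx1') ((hsum1 x hx1').mul_left _)]
    apply Summable.tsum_le_tsum _ ((hsum2 x hx1').sub ((hsum1 x hx1').mul_left _)) (hsumd x hx1')
    intro n
    rcases eq_or_ne n 0 with h | h
    · simp [h, hc0, dc]
    · by_cases hA : n ∈ A
      · have h1 : ((n : ℝ) - (k : ℝ)) * c n ≤ |(n : ℝ) - (k : ℝ)| := by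
          calc ((n : ℝ) - (k : ℝ)) * c n ≤ |((n : ℝ) - (k : ℝ)) * c n| := le_abs_self _
            _ = |(n : ℝ) - (k : ℝ)| * |c n| := abs_mul _ _
            _ ≤ |(n : ℝ) - (k : ℝ)| * 1 := mul_le_mul_of_nonneg_left (hcb n) (abs_nonneg _)
            _ = _ := mul_one _
        have h2 : (0:ℝ) ≤ x ^ n := pow_nonneg hx0 n
        have := mul_le_mul_of_nonneg_right h1 h2
        rw [show dc A k n = |(n : ℝ) - (k : ℝ)| from by unfold dc; rw [if_neg h, if_pos hA]]
        nlinarith [this]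
      · simp [dc, h, hA, hcA n h hA]
  have mono : ∑' n : ℕ, dc A k n * x ^ n ≤ ∑' n : ℕ, dc A k n * y ^ n := by
    apply Summable.tsum_le_tsum _ (hsumd x hx1') (hsumd y hy1')
    intro n
    rcases eq_or_ne n 0 with h | h
    · simp [h]
    · have hd0 : 0 ≤ dc A k n := by
        unfold dc; rw [if_neg h]; split
        · exact abs_nonneg _
        · exact le_refl 0
      exact mul_le_mul_of_nonneg_left (pow_le_pow_left₀ hx0 hxy n) hd0
  -- tail bound
  have hsy := hsumd y hy1'
  have Tbound : ∑' n : ℕ, dc A k n * y ^ n ≤ -((k : ℝ) + 1) * δ := by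
    rw [← Summable.sum_add_tsum_nat_add N hsy]
    have htail : ∑' i : ℕ, dc A k (i + N) * y ^ (i + N)
        ≤ y ^ N * (y / (1 - y) ^ 2 + ((N : ℝ) - (k : ℝ)) / (1 - y)) := by
      have hterm : ∀ i : ℕ, dc A k (i + N) * y ^ (i + N)
          ≤ y ^ N * (((i : ℝ) + ((N : ℝ) - (k : ℝ))) * y ^ i) := by
        intro i
        have hne : i + N ≠ 0 := by omega
        have hkN' : (k : ℝ) ≤ (N : ℝ) := by exact_mod_cast hkN
        have hi0 : (0 : ℝ) ≤ (i : ℝ) := Nat.cast_nonneg i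
        have hdle : dc A k (i + N) ≤ (i : ℝ) + ((N : ℝ) - (k : ℝ)) := by
          unfold dc; rw [if_neg hne]; split
          · rw [abs_of_nonneg (by push_cast; linarith)]
            push_cast; linarith
          · linarith
        calc dc A k (i + N) * y ^ (i + N)
            ≤ ((i : ℝ) + ((N : ℝ) - (k : ℝ))) * y ^ (i + N) :=
              mul_le_mul_of_nonneg_right hdle (pow_nonneg hy0.le _)
          _ = y ^ N * (((i : ℝ) + ((N : ℝ) - (k : ℝ))) * y ^ i) := by rw [pow_add]; ring
      have hrs : Summable (fun i : ℕ => y ^ N * (((i : ℝ) + ((N : ℝ) - (k : ℝ))) * y ^ i)) := by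
        apply Summable.mul_left
        have h1 : Summable (fun i : ℕ => (i : ℝ) * y ^ i) := by
          have := hsumgeo y hy1'
          exact this.congr fun n => by rw [abs_of_pos hy0]
        have h2 : Summable (fun i : ℕ => ((N : ℝ) - (k : ℝ)) * y ^ i) :=
          (summable_geometric_of_lt_one hy0.le hy1).mul_left _
        exact (h1.add h2).congr fun n => by ring
      have hls : Summable (fun i : ℕ => dc A k (i + N) * y ^ (i + N)) :=
        ((summable_nat_add_iff (f := fun m : ℕ => dc A k m * y ^ m) N).mpr hsy)
      calc ∑' i : ℕ, dc A k (i + N) * y ^ (i + N)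
          ≤ ∑' i : ℕ, y ^ N * (((i : ℝ) + ((N : ℝ) - (k : ℝ))) * y ^ i) :=
            Summable.tsum_le_tsum hterm hls hrs
        _ = y ^ N * ∑' i : ℕ, (((i : ℝ) + ((N : ℝ) - (k : ℝ))) * y ^ i) := tsum_mul_left
        _ = y ^ N * (y / (1 - y) ^ 2 + ((N : ℝ) - (k : ℝ)) / (1 - y)) := by
            congr 1
            have h1 : Summable (fun i : ℕ => (i : ℝ) * y ^ i) := by
              have := hsumgeo y hy1'
              exact this.congr fun n => by rw [abs_of_pos hy0]
            have h2 : Summable (fun i : ℕ => ((N : ℝ) - (k : ℝ)) * y ^ i) :=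
              (summable_geometric_of_lt_one hy0.le hy1).mul_left _
            have e3 : (fun i : ℕ => ((i : ℝ) + ((N : ℝ) - (k : ℝ))) * y ^ i)
                = fun i : ℕ => (i : ℝ) * y ^ i + ((N : ℝ) - (k : ℝ)) * y ^ i := by
              funext i; ring
            rw [e3, Summable.tsum_add h1 h2, tsum_mul_left, tsum_geometric_of_lt_one hy0.le hy1]
            rw [tsum_coe_mul_geometric_of_norm_lt_one
              (by rw [Real.norm_eq_abs]; exact hy1')]
            ring
    linarith [hnum]
  -- conclude
  rcases hx0.lt_or_eq with hx0' | hx0'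
  · have h1 : x * g' x < (k : ℝ) * δ - ((k : ℝ) + 1) * δ := by
      have hkf : (k : ℝ) * f x < (k : ℝ) * δ :=
        mul_lt_mul_of_pos_left hfx (by linarith)
      linarith [key, mono, Tbound]
    have h2 : x * g' x < -δ := by nlinarith [h1]
    rw [hderiv]
    by_contra hcon
    push_neg at hcon
    have h3 : x * (-δ) ≤ x * g' x := mul_le_mul_of_nonneg_left hcon hx0'.le
    have h4 : (0:ℝ) ≤ δ * (1 - x) := mul_nonneg hδ0.le (by linarith)
    linarith [h3, h2, h4]
  · exfalso
    have hf0 : f 0 = 1 := by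
      rw [hfeq 0]
      rw [tsum_eq_single 0 (fun n hn => by simp [zero_pow hn])]
      simp [hc0]
    rw [← hx0'] at hfx
    rw [hf0] at hfx
    linarith

lemma num1 (y : ℝ) (hy0 : 0 < y) (hy3 : y ^ (3:ℕ) = 1/4) :
    (∑ n ∈ Finset.range 6, dc {n : ℕ | 0 < n} 4 n * y ^ n)
      + y ^ 6 * (y / (1 - y) ^ 2 + ((6 : ℕ) - ((4:ℕ) : ℝ)) / (1 - y))
      ≤ -(((4:ℕ) : ℝ) + 1) * (1/100) := by
  have hyhi : y < 0.63 := by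
    by_contra h
    push_neg at h
    have h2 := pow_le_pow_left₀ (by norm_num : (0:ℝ) ≤ 0.63) h 3
    rw [hy3] at h2
    norm_num at h2
  have hylo : 0.6299 < y := by
    by_contra h
    push_neg at h
    have h2 := pow_le_pow_left₀ hy0.le h 3
    rw [hy3] at h2
    norm_num at h2
  have hsum : ∑ n ∈ Finset.range 6, dc {n : ℕ | 0 < n} 4 n * y ^ n
      = -4 + 3*y + 2*y^2 + y^3 + y^5 := by
    norm_num [dc, Finset.sum_range_succ, Set.mem_setOf_eq]
  rw [hsum]
  have h5 : y^5 = 1/4 * y^2 := by rw [show y^5 = y^2 * y^3 by ring, hy3]; ring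
  have h6 : y^6 = 1/16 := by rw [show y^6 = (y^3)^2 by ring, hy3]; norm_num
  have hden : (0.37:ℝ) < 1 - y := by linarith
  have hd1 : y/(1-y)^2 ≤ 4.7 := by
    rw [div_le_iff₀ (by positivity)]
    nlinarith
  have hd2 : 2/(1-y) ≤ 5.5 := by
    rw [div_le_iff₀ (by linarith)]
    linarith
  have hy2 : y^2 ≤ 0.3969 := by nlinarith
  rw [h5, hy3, h6]
  push_cast
  nlinarith [hd1, hd2, hy2, hyhi, hylo]

lemma num2 (y : ℝ) (hy0 : 0 < y) (hy2 : y ^ (2:ℕ) = 1/2) :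
    (∑ n ∈ Finset.range 6, dc {n : ℕ | 0 < n ∧ ¬(3 : ℤ) ∣ ((n : ℤ) - 1)} 4 n * y ^ n)
      + y ^ 6 * (y / (1 - y) ^ 2 + ((6 : ℕ) - ((4:ℕ) : ℝ)) / (1 - y))
      ≤ -(((4:ℕ) : ℝ) + 1) * (1/100) := by
  have hyhi : y < 0.70711 := by
    by_contra h
    push_neg at h
    have h2 := pow_le_pow_left₀ (by norm_num : (0:ℝ) ≤ 0.70711) h 2
    rw [hy2] at h2
    norm_num at h2
  have hylo : 0.7071 < y := by
    by_contra h
    push_neg at h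
    have h2 := pow_le_pow_left₀ hy0.le h 2
    rw [hy2] at h2
    norm_num at h2
  have hsum : ∑ n ∈ Finset.range 6,
        dc {n : ℕ | 0 < n ∧ ¬(3 : ℤ) ∣ ((n : ℤ) - 1)} 4 n * y ^ n
      = -4 + 2*y^2 + y^3 + y^5 := by
    norm_num [dc, Finset.sum_range_succ, Set.mem_setOf_eq]
  rw [hsum]
  have h3 : y^3 = 1/2 * y := by rw [show y^3 = y * y^2 by ring, hy2]; ring
  have h5 : y^5 = 1/4 * y := by rw [show y^5 = y * (y^2)^2 by ring, hy2]; ring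
  have h6 : y^6 = 1/8 := by rw [show y^6 = (y^2)^3 by ring, hy2]; norm_num
  have hden : (0.29289:ℝ) < 1 - y := by linarith
  have hd1 : y/(1-y)^2 ≤ 8.3 := by
    rw [div_le_iff₀ (by positivity)]
    nlinarith
  have hd2 : 2/(1-y) ≤ 6.9 := by
    rw [div_le_iff₀ (by linarith)]
    linarith
  rw [h3, h5, h6, hy2]
  push_cast
  nlinarith [hd1, hd2, hyhi, hylo]

lemma num3 (y : ℝ) (hy0 : 0 < y) (hy2 : y ^ (2:ℕ) = 1/2) :
    (∑ n ∈ Finset.range 16, dc {n : ℕ | 0 < n ∧ ¬(3 : ℤ) ∣ ((n : ℤ) - 2)} 6 n * y ^ n)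
      + y ^ 16 * (y / (1 - y) ^ 2 + ((16 : ℕ) - ((6:ℕ) : ℝ)) / (1 - y))
      ≤ -(((6:ℕ) : ℝ) + 1) * (1/100) := by
  have hyhi : y < 0.70711 := by
    by_contra h
    push_neg at h
    have h2 := pow_le_pow_left₀ (by norm_num : (0:ℝ) ≤ 0.70711) h 2
    rw [hy2] at h2
    norm_num at h2
  have hylo : 0.7071 < y := by
    by_contra h
    push_neg at h
    have h2 := pow_le_pow_left₀ hy0.le h 2
    rw [hy2] at h2
    norm_num at h2
  have hsum : ∑ n ∈ Finset.range 16,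
        dc {n : ℕ | 0 < n ∧ ¬(3 : ℤ) ∣ ((n : ℤ) - 2)} 6 n * y ^ n
      = -6 + 5*y + 3*y^3 + 2*y^4 + y^7 + 3*y^9 + 4*y^10 + 6*y^12 + 7*y^13 + 9*y^15 := by
    norm_num [dc, Finset.sum_range_succ, Set.mem_setOf_eq]
  rw [hsum]
  have h3 : y^3 = 1/2 * y := by rw [show y^3 = y * y^2 by ring, hy2]; ring
  have h4 : y^4 = 1/4 := by rw [show y^4 = (y^2)^2 by ring, hy2]; norm_num
  have h7 : y^7 = 1/8 * y := by rw [show y^7 = y * (y^2)^3 by ring, hy2]; ring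
  have h9 : y^9 = 1/16 * y := by rw [show y^9 = y * (y^2)^4 by ring, hy2]; ring
  have h10 : y^10 = 1/32 := by rw [show y^10 = (y^2)^5 by ring, hy2]; norm_num
  have h12 : y^12 = 1/64 := by rw [show y^12 = (y^2)^6 by ring, hy2]; norm_num
  have h13 : y^13 = 1/64 * y := by rw [show y^13 = y * (y^2)^6 by ring, hy2]; ring
  have h15 : y^15 = 1/128 * y := by rw [show y^15 = y * (y^2)^7 by ring, hy2]; ring
  have h16 : y^16 = 1/256 := by rw [show y^16 = (y^2)^8 by ring, hy2]; norm_num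
  have hden : (0.29289:ℝ) < 1 - y := by linarith
  have hd1 : y/(1-y)^2 ≤ 8.3 := by
    rw [div_le_iff₀ (by positivity)]
    nlinarith
  have hd2 : 10/(1-y) ≤ 34.5 := by
    rw [div_le_iff₀ (by linarith)]
    linarith
  rw [h3, h4, h7, h9, h10, h12, h13, h15, h16]
  push_cast
  nlinarith [hd1, hd2, hyhi, hylo]


/-- There is an absolute constant `δ > 0` such that `[0, 2 ^ (-2/3)]` is an interval of
`δ`-transversality for `𝒫 = 𝒫_{n > 0}`, and `[0, 2 ^ (-1/2)]` is an interval of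
`δ`-transversality for `𝒫_i = 𝒫_{n > 0 : 3 ∤ n - i}`, `i = 1, 2`. -/
theorem exists_transversality_constant :
    ∃ δ : ℝ, 0 < δ ∧
      IsTransversalityInterval {n : ℕ | 0 < n} δ ((2 : ℝ) ^ (-(2 / 3 : ℝ))) ∧
      IsTransversalityInterval {n : ℕ | 0 < n ∧ ¬(3 : ℤ) ∣ ((n : ℤ) - 1)} δ
        ((2 : ℝ) ^ (-(1 / 2 : ℝ))) ∧
      IsTransversalityInterval {n : ℕ | 0 < n ∧ ¬(3 : ℤ) ∣ ((n : ℤ) - 2)} δ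
        ((2 : ℝ) ^ (-(1 / 2 : ℝ))) := by
  have hy0a : (0:ℝ) < (2 : ℝ) ^ (-(2 / 3 : ℝ)) := Real.rpow_pos_of_pos (by norm_num) _
  have hy1a : ((2 : ℝ) ^ (-(2 / 3 : ℝ))) < 1 :=
    Real.rpow_lt_one_of_one_lt_of_neg (by norm_num) (by norm_num)
  have hy0b : (0:ℝ) < (2 : ℝ) ^ (-(1 / 2 : ℝ)) := Real.rpow_pos_of_pos (by norm_num) _
  have hy1b : ((2 : ℝ) ^ (-(1 / 2 : ℝ))) < 1 :=
    Real.rpow_lt_one_of_one_lt_of_neg (by norm_num) (by norm_num)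
  have hy3a : ((2 : ℝ) ^ (-(2 / 3 : ℝ))) ^ (3:ℕ) = 1/4 := by
    rw [← Real.rpow_natCast ((2:ℝ) ^ (-(2/3:ℝ))) 3, ← Real.rpow_mul (by norm_num : (0:ℝ) ≤ 2)]
    rw [show (-(2/3:ℝ)) * ((3:ℕ):ℝ) = ((-2:ℤ):ℝ) by push_cast; ring]
    rw [Real.rpow_intCast]
    norm_num
  have hy2b : ((2 : ℝ) ^ (-(1 / 2 : ℝ))) ^ (2:ℕ) = 1/2 := by
    rw [← Real.rpow_natCast ((2:ℝ) ^ (-(1/2:ℝ))) 2, ← Real.rpow_mul (by norm_num : (0:ℝ) ≤ 2)]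
    rw [show (-(1/2:ℝ)) * ((2:ℕ):ℝ) = ((-1:ℤ):ℝ) by push_cast; ring]
    rw [Real.rpow_intCast]
    norm_num
  refine ⟨1/100, by norm_num, ?_, ?_, ?_⟩
  · exact master _ 4 6 _ _ (by norm_num) (by norm_num) hy0a hy1a (by norm_num) (by norm_num)
      (num1 _ hy0a hy3a)
  · exact master _ 4 6 _ _ (by norm_num) (by norm_num) hy0b hy1b (by norm_num) (by norm_num)
      (num2 _ hy0b hy2b)
  · exact master _ 6 16 _ _ (by norm_num) (by norm_num) hy0b hy1b (by norm_num) (by norm_num)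
      (num3 _ hy0b hy2b)
end

section
/- For t > 0, let f_t : ℝ → ℝ be given by f_t(x) = (φ(x − t) + φ(x + t))/2, where φ(x) = (2π)^{−1/2} e^{−x²/2}, and let h(t) = −∫_ℝ f_t(x) log f_t(x) dx. Then lim_{t→∞} h(t) = log 2 + (1/2) log(2πe) and lim_{t→0^+} h(t) = (1/2) log(2πe). (Equivalently, the differential entropy of X₀t + G tends to log 2 + H(G) as t → ∞ and to H(G) as t → 0, where X₀ is a uniform ±1 random variable and G an independent standard Gaussian.) -/
open Real MeasureTheory Filter

/-- The standard Gaussian density. -/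
noncomputable def gaussDensity (x : ℝ) : ℝ := (2 * Real.pi) ^ (-(1 / 2 : ℝ)) * Real.exp (-x ^ 2 / 2)

lemma two_pi_pos' : (0:ℝ) < 2 * Real.pi := by positivity

lemma gauss_pos (x : ℝ) : 0 < gaussDensity x :=
  mul_pos (Real.rpow_pos_of_pos two_pi_pos' _) (Real.exp_pos _)

lemma gauss_eq (x : ℝ) :
    gaussDensity x = (2*Real.pi) ^ (-(1/2:ℝ)) * Real.exp (-(1/2) * x^2) := by
  rw [gaussDensity]
  congr 2
  ring

lemma cont_gauss : Continuous gaussDensity := by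
  unfold gaussDensity
  fun_prop

lemma integrable_gauss : Integrable gaussDensity := by
  have h := (integrable_exp_neg_mul_sq (show (0:ℝ) < 1/2 by norm_num)).const_mul
    ((2*Real.pi) ^ (-(1/2:ℝ)))
  exact h.congr (Filter.Eventually.of_forall fun x => (gauss_eq x).symm)

lemma integrable_sq_gauss : Integrable (fun x : ℝ => x^2 * gaussDensity x) := by
  have h := (integrable_rpow_mul_exp_neg_mul_sq (show (0:ℝ) < 1/2 by norm_num)
    (show (-1:ℝ) < 2 by norm_num)).const_mul ((2*Real.pi) ^ (-(1/2:ℝ)))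
  refine h.congr (Filter.Eventually.of_forall fun x => ?_)
  simp only [Real.rpow_two, gauss_eq]
  ring

lemma integral_gauss : ∫ x : ℝ, gaussDensity x = 1 := by
  have h : ∫ x : ℝ, gaussDensity x
      = (2*Real.pi) ^ (-(1/2:ℝ)) * ∫ x : ℝ, Real.exp (-(1/2) * x^2) := by
    rw [← integral_const_mul]
    exact integral_congr_ae (Filter.Eventually.of_forall fun x => gauss_eq x)
  rw [h, integral_gaussian, show Real.pi / (1/2) = 2*Real.pi by ring, Real.sqrt_eq_rpow,
    ← Real.rpow_add two_pi_pos']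
  norm_num

lemma integral_sq_exp : ∫ x : ℝ, x^2 * Real.exp (-(1/2) * x^2) = Real.sqrt (2*Real.pi) := by
  have h12 : (0:ℝ) < 1/2 := by norm_num
  have hu : ∀ x : ℝ, HasDerivAt (fun x : ℝ => x) 1 x := fun x => hasDerivAt_id x
  have hv : ∀ x : ℝ, HasDerivAt (fun x : ℝ => -Real.exp (-(1/2) * x^2))
      (x * Real.exp (-(1/2) * x^2)) x := by
    intro x
    have h1 : HasDerivAt (fun x : ℝ => -(1/2) * x^2) (-(1/2) * (2*x)) x := by
      simpa using (hasDerivAt_pow 2 x).const_mul (-(1/2):ℝ)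
    have h2 : HasDerivAt (fun x : ℝ => -Real.exp (-(1/2) * x^2)) _ x := h1.exp.neg
    convert h2 using 1
    ring
  have huv' : Integrable ((fun x : ℝ => x) * fun x : ℝ => x * Real.exp (-(1/2) * x^2)) := by
    refine (integrable_rpow_mul_exp_neg_mul_sq h12 (show (-1:ℝ) < 2 by norm_num)).congr
      (Filter.Eventually.of_forall fun x => ?_)
    simp only [Real.rpow_two, Pi.mul_apply]
    ring
  have hu'v : Integrable ((fun _ : ℝ => (1:ℝ)) * fun x : ℝ => -Real.exp (-(1/2) * x^2)) := by
    refine (integrable_exp_neg_mul_sq h12).neg.congr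
      (Filter.Eventually.of_forall fun x => ?_)
    simp
  have huv : Integrable ((fun x : ℝ => x) * fun x : ℝ => -Real.exp (-(1/2) * x^2)) := by
    refine (integrable_mul_exp_neg_mul_sq h12).neg.congr
      (Filter.Eventually.of_forall fun x => ?_)
    simp only [Pi.neg_apply, Pi.mul_apply]
    ring
  have key := integral_mul_deriv_eq_deriv_mul_of_integrable (fun x _ => hu x) (fun x _ => hv x) huv' hu'v huv
  have h2 : ∫ x : ℝ, x * (x * Real.exp (-(1/2) * x^2)) = ∫ x : ℝ, x^2 * Real.exp (-(1/2) * x^2) :=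
    integral_congr_ae (Filter.Eventually.of_forall fun x => by ring)
  have h3 : -∫ x : ℝ, (1:ℝ) * -Real.exp (-(1/2) * x^2) = ∫ x : ℝ, Real.exp (-(1/2) * x^2) := by
    rw [← integral_neg]
    exact integral_congr_ae (Filter.Eventually.of_forall fun x => by ring)
  rw [h2, h3] at key
  rw [key, integral_gaussian, show Real.pi / (1/2) = 2*Real.pi by ring]

lemma integral_sq_gauss : ∫ x : ℝ, x^2 * gaussDensity x = 1 := by
  have h : ∫ x : ℝ, x^2 * gaussDensity x
      = (2*Real.pi) ^ (-(1/2:ℝ)) * ∫ x : ℝ, x^2 * Real.exp (-(1/2) * x^2) := by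
    rw [← integral_const_mul]
    refine integral_congr_ae (Filter.Eventually.of_forall fun x => ?_)
    simp only [gauss_eq]; ring
  rw [h, integral_sq_exp, Real.sqrt_eq_rpow, ← Real.rpow_add two_pi_pos']
  norm_num

lemma log_gauss (x : ℝ) :
    Real.log (gaussDensity x) = -(1/2) * Real.log (2*Real.pi) - x^2/2 := by
  rw [gaussDensity, Real.log_mul (by positivity) (Real.exp_ne_zero _),
    Real.log_rpow two_pi_pos', Real.log_exp]
  ring

lemma integrable_gauss_log_gauss :
    Integrable (fun x : ℝ => gaussDensity x * Real.log (gaussDensity x)) := by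
  have h : (fun x : ℝ => gaussDensity x * Real.log (gaussDensity x))
      = fun x => (-(1/2) * Real.log (2*Real.pi)) * gaussDensity x
        - (1/2) * (x^2 * gaussDensity x) := by
    funext x
    simp only [log_gauss]
    ring
  rw [h]
  exact (integrable_gauss.const_mul _).sub (integrable_sq_gauss.const_mul _)

lemma integral_gauss_log_gauss :
    ∫ x : ℝ, gaussDensity x * Real.log (gaussDensity x)
      = -((1/2) * Real.log (2*Real.pi) + 1/2) := by
  have h : ∫ x : ℝ, gaussDensity x * Real.log (gaussDensity x)
      = ∫ x : ℝ, ((-(1/2) * Real.log (2*Real.pi)) * gaussDensity x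
        - (1/2) * (x^2 * gaussDensity x)) := by
    refine integral_congr_ae (Filter.Eventually.of_forall fun x => ?_)
    simp only [log_gauss]
    ring
  rw [h, integral_sub (integrable_gauss.const_mul _) (integrable_sq_gauss.const_mul _),
    integral_const_mul, integral_const_mul, integral_gauss, integral_sq_gauss]
  ring

noncomputable def Rfun (t : ℝ) : ℝ :=
  ∫ y : ℝ, gaussDensity y * Real.log (1 + Real.exp (-(2*t*y) - 2*t^2))

lemma one_add_exp_pos (u : ℝ) : (0:ℝ) < 1 + Real.exp u := by positivity

lemma log_one_add_exp_nonneg (u : ℝ) : 0 ≤ Real.log (1 + Real.exp u) :=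
  Real.log_nonneg (by linarith [Real.exp_pos u])

lemma log_one_add_exp_le (u : ℝ) : Real.log (1 + Real.exp u) ≤ Real.log 2 + max u 0 := by
  have e1 : (1:ℝ) ≤ Real.exp (max u 0) := Real.one_le_exp (le_max_right _ _)
  have e2 : Real.exp u ≤ Real.exp (max u 0) := Real.exp_le_exp.2 (le_max_left _ _)
  have h1 : 1 + Real.exp u ≤ 2 * Real.exp (max u 0) := by linarith
  calc Real.log (1 + Real.exp u) ≤ Real.log (2 * Real.exp (max u 0)) :=
        Real.log_le_log (one_add_exp_pos u) h1
    _ = Real.log 2 + max u 0 := by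
        rw [Real.log_mul two_ne_zero (Real.exp_ne_zero _), Real.log_exp]

lemma F_bound (t y : ℝ) :
    ‖gaussDensity y * Real.log (1 + Real.exp (-(2*t*y) - 2*t^2))‖
      ≤ gaussDensity y * (Real.log 2 + 2*y^2) := by
  rw [Real.norm_eq_abs, abs_of_nonneg
    (mul_nonneg (gauss_pos y).le (log_one_add_exp_nonneg _))]
  refine mul_le_mul_of_nonneg_left ?_ (gauss_pos y).le
  refine le_trans (log_one_add_exp_le _) (add_le_add_right ?_ _)
  refine max_le ?_ (by positivity)
  nlinarith [sq_nonneg (y + t), sq_nonneg y, sq_nonneg t]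

lemma bound_integrable :
    Integrable (fun y : ℝ => gaussDensity y * (Real.log 2 + 2*y^2)) := by
  have h : (fun y : ℝ => gaussDensity y * (Real.log 2 + 2*y^2))
      = fun y => Real.log 2 * gaussDensity y + 2 * (y^2 * gaussDensity y) := by
    funext y; ring
  rw [h]
  exact (integrable_gauss.const_mul _).add (integrable_sq_gauss.const_mul _)

lemma cont_F (t : ℝ) :
    Continuous (fun y : ℝ => gaussDensity y * Real.log (1 + Real.exp (-(2*t*y) - 2*t^2))) := by
  have h1 : Continuous fun y : ℝ => 1 + Real.exp (-(2*t*y) - 2*t^2) := by fun_prop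
  exact cont_gauss.mul (h1.log fun y => (one_add_exp_pos _).ne')

lemma integrable_F (t : ℝ) :
    Integrable (fun y : ℝ => gaussDensity y * Real.log (1 + Real.exp (-(2*t*y) - 2*t^2))) :=
  bound_integrable.mono' (cont_F t).aestronglyMeasurable
    (Filter.Eventually.of_forall fun y => F_bound t y)

/-- The density of `X₀ * t + G`, where `X₀` is a fair `±1` random variable and `G` an independent
standard Gaussian. -/
noncomputable def mixDensity (t x : ℝ) : ℝ := (gaussDensity (x - t) + gaussDensity (x + t)) / 2

/-- The differential entropy of `X₀ * t + G`. -/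
noncomputable def mixEntropy (t : ℝ) : ℝ := -∫ x : ℝ, mixDensity t x * Real.log (mixDensity t x)

lemma gauss_neg (x : ℝ) : gaussDensity (-x) = gaussDensity x := by
  rw [gaussDensity, gaussDensity]
  congr 2
  ring

lemma mixDensity_pos (t x : ℝ) : 0 < mixDensity t x :=
  div_pos (add_pos (gauss_pos _) (gauss_pos _)) two_pos

lemma mixDensity_neg (t x : ℝ) : mixDensity t (-x) = mixDensity t x := by
  rw [mixDensity, mixDensity, show -x - t = -(x + t) by ring, show -x + t = -(x - t) by ring,
    gauss_neg, gauss_neg, add_comm]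

lemma mixDensity_shift (t y : ℝ) :
    mixDensity t (y + t) = gaussDensity y * (1 + Real.exp (-(2*t*y) - 2*t^2)) / 2 := by
  have h2 : gaussDensity (y + t + t) = gaussDensity y * Real.exp (-(2*t*y) - 2*t^2) := by
    rw [gaussDensity, gaussDensity, mul_assoc, ← Real.exp_add]
    congr 2
    ring
  rw [mixDensity, show y + t - t = y by ring, h2]
  ring

lemma log_mixDensity_shift (t y : ℝ) :
    Real.log (mixDensity t (y + t))
      = Real.log (gaussDensity y) + Real.log (1 + Real.exp (-(2*t*y) - 2*t^2)) - Real.log 2 := by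
  rw [mixDensity_shift, Real.log_div (mul_pos (gauss_pos y) (one_add_exp_pos _)).ne' two_ne_zero,
    Real.log_mul (gauss_pos y).ne' (one_add_exp_pos _).ne']

lemma key (t : ℝ) :
    mixEntropy t = Real.log 2 + ((1/2) * Real.log (2*Real.pi) + 1/2) - Rfun t := by
  set u : ℝ → ℝ := fun x => gaussDensity (x - t) * Real.log (mixDensity t x) with hu
  have hshift : (fun y => u (y + t))
      = fun y => (gaussDensity y * Real.log (gaussDensity y)
          + gaussDensity y * Real.log (1 + Real.exp (-(2*t*y) - 2*t^2)))
          - Real.log 2 * gaussDensity y := by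
    funext y
    simp only [hu]
    rw [show y + t - t = y by ring, log_mixDensity_shift]
    ring
  have hI : Integrable (fun y => u (y + t)) := by
    rw [hshift]
    exact (integrable_gauss_log_gauss.add (integrable_F t)).sub (integrable_gauss.const_mul _)
  have hu_int : Integrable u := by
    have h := hI.comp_add_right (-t)
    refine h.congr (Filter.Eventually.of_forall fun x => ?_)
    simp only []
    rw [show x + -t + t = x by ring]
  have hun_int : Integrable (fun x => u (-x)) := hu_int.comp_neg
  have heven : ∀ x, mixDensity t x * Real.log (mixDensity t x) = (u x + u (-x)) / 2 := by
    intro x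
    have h1 : u (-x) = gaussDensity (x + t) * Real.log (mixDensity t x) := by
      simp only [hu]
      rw [show -x - t = -(x + t) by ring, gauss_neg, mixDensity_neg]
    rw [h1]
    simp only [hu]
    set L := Real.log (mixDensity t x) with hL
    rw [mixDensity]
    ring
  have hint : ∫ x : ℝ, mixDensity t x * Real.log (mixDensity t x) = ∫ x : ℝ, u x := by
    rw [integral_congr_ae (Filter.Eventually.of_forall heven)]
    rw [integral_div, integral_add hu_int hun_int, integral_neg_eq_self]
    ring
  have hint2 : ∫ x : ℝ, u x = ∫ y : ℝ, u (y + t) :=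
    (integral_add_right_eq_self u t).symm
  have hint3 : ∫ y : ℝ, u (y + t)
      = (∫ y : ℝ, gaussDensity y * Real.log (gaussDensity y)) + Rfun t
        - Real.log 2 * ∫ y : ℝ, gaussDensity y := by
    have hA : Integrable (fun y : ℝ => gaussDensity y * Real.log (gaussDensity y)
        + gaussDensity y * Real.log (1 + Real.exp (-(2*t*y) - 2*t^2))) :=
      integrable_gauss_log_gauss.add (integrable_F t)
    have hC : Integrable (fun y : ℝ => Real.log 2 * gaussDensity y) :=
      integrable_gauss.const_mul _
    rw [hshift, integral_sub hA hC,
      integral_add integrable_gauss_log_gauss (integrable_F t), integral_const_mul]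
    rfl
  rw [mixEntropy, hint, hint2, hint3, integral_gauss_log_gauss, integral_gauss]
  ring

lemma R_atTop : Tendsto Rfun atTop (nhds 0) := by
  unfold Rfun
  have main := tendsto_integral_filter_of_dominated_convergence (μ := volume) (l := atTop)
    (F := fun t y : ℝ => gaussDensity y * Real.log (1 + Real.exp (-(2*t*y) - 2*t^2)))
    (f := fun _ : ℝ => (0:ℝ))
    (fun y : ℝ => gaussDensity y * (Real.log 2 + 2*y^2))
    (Filter.Eventually.of_forall fun t => (cont_F t).aestronglyMeasurable)
    (Filter.Eventually.of_forall fun t => Filter.Eventually.of_forall fun y => F_bound t y)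
    bound_integrable
    (Filter.Eventually.of_forall fun y => ?_)
  · simpa using main
  have h1 : Tendsto (fun t : ℝ => 2*t*y + 2*t^2) atTop atTop := by
    refine tendsto_atTop_mono' atTop ?_ tendsto_id
    filter_upwards [eventually_ge_atTop (|y| + 1)] with t ht
    have hy : -|y| ≤ y := neg_abs_le y
    have h0 : (0:ℝ) ≤ |y| := abs_nonneg y
    simp only [id_eq]
    nlinarith
  have h1' : Tendsto (fun t : ℝ => -(2*t*y) - 2*t^2) atTop atBot := by
    have h := tendsto_neg_atTop_atBot.comp h1
    refine h.congr fun t => ?_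
    simp only [Function.comp]
    ring
  have h2 : Tendsto (fun t : ℝ => Real.exp (-(2*t*y) - 2*t^2)) atTop (nhds 0) :=
    Real.tendsto_exp_atBot.comp h1'
  have h3 : Tendsto (fun t : ℝ => Real.log (1 + Real.exp (-(2*t*y) - 2*t^2))) atTop
      (nhds (Real.log (1 + 0))) :=
    ((Real.continuousAt_log (by norm_num)).tendsto.comp (tendsto_const_nhds.add h2))
  have h4 := h3.const_mul (gaussDensity y)
  simpa using h4

lemma R_zero : Tendsto Rfun (nhdsWithin 0 (Set.Ioi 0)) (nhds (Real.log 2)) := by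
  unfold Rfun
  have hval : ∫ y : ℝ, gaussDensity y * Real.log 2 = Real.log 2 := by
    rw [integral_mul_const, integral_gauss, one_mul]
  have main := tendsto_integral_filter_of_dominated_convergence (μ := volume)
    (l := nhdsWithin (0:ℝ) (Set.Ioi 0))
    (F := fun t y : ℝ => gaussDensity y * Real.log (1 + Real.exp (-(2*t*y) - 2*t^2)))
    (f := fun y : ℝ => gaussDensity y * Real.log 2)
    (fun y : ℝ => gaussDensity y * (Real.log 2 + 2*y^2))
    (Filter.Eventually.of_forall fun t => (cont_F t).aestronglyMeasurable)
    (Filter.Eventually.of_forall fun t => Filter.Eventually.of_forall fun y => F_bound t y)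
    bound_integrable
    (Filter.Eventually.of_forall fun y => ?_)
  · rwa [hval] at main
  · have hc : Continuous fun t : ℝ => gaussDensity y * Real.log (1 + Real.exp (-(2*t*y) - 2*t^2)) := by
      have h1 : Continuous fun t : ℝ => 1 + Real.exp (-(2*t*y) - 2*t^2) := by fun_prop
      exact continuous_const.mul (h1.log fun t => (one_add_exp_pos _).ne')
    have h := (hc.tendsto 0).mono_left (nhdsWithin_le_nhds (s := Set.Ioi 0))
    have h0 : gaussDensity y * Real.log (1 + Real.exp (-(2*(0:ℝ)*y) - 2*(0:ℝ)^2))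
        = gaussDensity y * Real.log 2 := by
      norm_num
    rwa [h0] at h

/-- The differential entropy of `X₀ * t + G` tends to `log 2 + (1/2) log (2 π e)` as `t → ∞`
and to `(1/2) log (2 π e)` as `t → 0⁺`. -/
theorem mixEntropy_limits :
    Filter.Tendsto mixEntropy Filter.atTop
      (nhds (Real.log 2 + (1 / 2) * Real.log (2 * Real.pi * Real.exp 1))) ∧
    Filter.Tendsto mixEntropy (nhdsWithin 0 (Set.Ioi 0))
      (nhds ((1 / 2) * Real.log (2 * Real.pi * Real.exp 1))) := by
  have hH : (1/2:ℝ) * Real.log (2 * Real.pi * Real.exp 1)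
      = (1/2) * Real.log (2*Real.pi) + 1/2 := by
    rw [Real.log_mul two_pi_pos'.ne' (Real.exp_ne_zero 1), Real.log_exp]
    ring
  have hfun : mixEntropy = fun t => Real.log 2 + ((1/2) * Real.log (2*Real.pi) + 1/2) - Rfun t :=
    funext key
  constructor
  · rw [hfun]
    have h := R_atTop.const_sub (Real.log 2 + ((1/2) * Real.log (2*Real.pi) + 1/2))
    rw [hH]
    simpa using h
  · rw [hfun]
    have h := R_zero.const_sub (Real.log 2 + ((1/2) * Real.log (2*Real.pi) + 1/2))
    rw [hH]
    have he : Real.log 2 + ((1/2) * Real.log (2*Real.pi) + 1/2) - Real.log 2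
        = (1/2) * Real.log (2*Real.pi) + 1/2 := by ring
    rwa [he] at h
end
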